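/- Let A be a herd in a braided monoidal category C with reflexive coequalizers preserved by tensoring, and ϖ : A ⊗ A ⟶ H the coequalizer of σ and τ. Then there is a unique morphism μ_act : H ⊗ A ⟶ A with μ_act ∘ (ϖ ⊗ 1_A) = q : A⊗³ ⟶ A, and the fusion morphism v = (μ_act ⊗ 1_A) ∘ (1_H ⊗ δ) : H ⊗ A ⟶ A ⊗ A is invertible, with inverse (ϖ ⊗ 1_A) ∘ (1_A ⊗ δ) : A ⊗ A ⟶ H ⊗ A. -/

import Mathlib

open CategoryTheory MonoidalCategory Category

universe v u

variable {C : Type u} [Category.{v} C] [MonoidalCategory C] [BraidedCategory C]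

/-- The braiding of the first two factors of a right-nested triple tensor product. -/
def swap3 (X Y Z : C) : X ⊗ Y ⊗ Z ⟶ Y ⊗ X ⊗ Z :=
  (α_ X Y Z).inv ≫ ((β_ X Y).hom ▷ Z) ≫ (α_ Y X Z).hom

/-- A herd in a braided monoidal category `C`: a comonoid `A` together with a
comonoid morphism `q : A ⊗ A° ⊗ A ⟶ A` satisfying para-associativity and the
two unit laws. -/
structure Herd (C : Type u) [Category.{v} C] [MonoidalCategory C] [BraidedCategory C] where
  A : C
  del : A ⟶ A ⊗ A
  eps : A ⟶ 𝟙_ C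
  coassoc : del ≫ (del ▷ A) ≫ (α_ A A A).hom = del ≫ (A ◁ del)
  counit_left : del ≫ (eps ▷ A) ≫ (λ_ A).hom = 𝟙 A
  counit_right : del ≫ (A ◁ eps) ≫ (ρ_ A).hom = 𝟙 A
  q : A ⊗ A ⊗ A ⟶ A
  q_counit : q ≫ eps = (eps ⊗ₘ eps ⊗ₘ eps) ≫ (𝟙_ C ◁ (λ_ (𝟙_ C)).hom) ≫ (λ_ (𝟙_ C)).hom
  q_comul : q ≫ del =
    (del ⊗ₘ (del ≫ (β_ A A).hom) ⊗ₘ del) ≫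
      (α_ A A ((A ⊗ A) ⊗ (A ⊗ A))).hom ≫ (A ◁ (A ◁ (α_ A A (A ⊗ A)).hom)) ≫
      (A ◁ swap3 A A (A ⊗ A ⊗ A)) ≫
      (A ◁ (A ◁ (A ◁ swap3 A A A))) ≫
      (A ◁ (A ◁ swap3 A A (A ⊗ A))) ≫
      (A ◁ (α_ A A (A ⊗ A ⊗ A)).inv) ≫ (α_ A (A ⊗ A) (A ⊗ A ⊗ A)).inv ≫
      (q ⊗ₘ q)
  q_assoc : (A ◁ (α_ A A (A ⊗ A)).inv) ≫ (α_ A (A ⊗ A) (A ⊗ A)).inv ≫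
      (q ▷ (A ⊗ A)) ≫ q = (A ◁ (A ◁ q)) ≫ q
  q_unit_right : (A ◁ del) ≫ q = (A ◁ eps) ≫ (ρ_ A).hom
  q_unit_left : (del ▷ A) ≫ (α_ A A A).hom ≫ q = (eps ▷ A) ≫ (λ_ A).hom

/-- `σ = (q ⊗ 1) ∘ (1 ⊗ 1 ⊗ δ) : A⊗³ ⟶ A ⊗ A`. -/
def herdSigma (h : Herd C) : h.A ⊗ h.A ⊗ h.A ⟶ h.A ⊗ h.A :=
  (h.A ◁ (h.A ◁ h.del)) ≫ (h.A ◁ (α_ h.A h.A h.A).inv) ≫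
    (α_ h.A (h.A ⊗ h.A) h.A).inv ≫ (h.q ▷ h.A)

/-- `τ = 1 ⊗ 1 ⊗ ε : A⊗³ ⟶ A ⊗ A`. -/
def herdTau (h : Herd C) : h.A ⊗ h.A ⊗ h.A ⟶ h.A ⊗ h.A :=
  (h.A ◁ (h.A ◁ h.eps)) ≫ (h.A ◁ (ρ_ h.A).hom)

/-- The positive braid on `A⊗⁴` with underlying permutation `1,3,4,2`. -/
def c1342 (h : Herd C) : h.A ⊗ h.A ⊗ h.A ⊗ h.A ⟶ h.A ⊗ h.A ⊗ h.A ⊗ h.A :=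
  (h.A ◁ swap3 h.A h.A h.A) ≫ (h.A ◁ (h.A ◁ (β_ h.A h.A).hom))


section AuxHerd

variable (h : Herd C)

private lemma herd_del_eps : h.del ≫ (h.eps ▷ h.A) = (λ_ h.A).inv := by
  rw [← cancel_mono (λ_ h.A).hom, assoc, h.counit_left, Iso.inv_hom_id]

private lemma auxL2 :
    (h.A ◁ h.del) ≫ (α_ h.A h.A h.A).inv ≫ ((h.A ⊗ h.A) ◁ h.del) ≫
      (α_ (h.A ⊗ h.A) h.A h.A).inv ≫ (((α_ h.A h.A h.A).hom ≫ h.q) ▷ h.A)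
    = 𝟙 (h.A ⊗ h.A) := by
  have hlam := herd_del_eps h
  calc (h.A ◁ h.del) ≫ (α_ h.A h.A h.A).inv ≫ ((h.A ⊗ h.A) ◁ h.del) ≫
      (α_ (h.A ⊗ h.A) h.A h.A).inv ≫ (((α_ h.A h.A h.A).hom ≫ h.q) ▷ h.A)
      = (h.A ◁ (h.del ≫ (h.A ◁ h.del))) ≫ (α_ h.A h.A (h.A ⊗ h.A)).inv ≫
        (α_ (h.A ⊗ h.A) h.A h.A).inv ≫ ((α_ h.A h.A h.A).hom ▷ h.A) ≫ (h.q ▷ h.A) := by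
          simp only [MonoidalCategory.whiskerLeft_comp, comp_whiskerRight, assoc,
            associator_inv_naturality_right_assoc]
    _ = (h.A ◁ (h.del ≫ (h.del ▷ h.A) ≫ (α_ h.A h.A h.A).hom)) ≫ (α_ h.A h.A (h.A ⊗ h.A)).inv ≫
        (α_ (h.A ⊗ h.A) h.A h.A).inv ≫ ((α_ h.A h.A h.A).hom ▷ h.A) ≫ (h.q ▷ h.A) := by
          rw [h.coassoc]
    _ = (h.A ◁ h.del) ≫ (α_ h.A h.A h.A).inv ≫ (((h.A ◁ h.del) ≫ h.q) ▷ h.A) := by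
          simp only [MonoidalCategory.whiskerLeft_comp, comp_whiskerRight, assoc]
          congr 1
          simp
    _ = (h.A ◁ h.del) ≫ (α_ h.A h.A h.A).inv ≫ (((h.A ◁ h.eps) ≫ (ρ_ h.A).hom) ▷ h.A) := by
          rw [h.q_unit_right]
    _ = 𝟙 (h.A ⊗ h.A) := by
          rw [comp_whiskerRight, ← associator_inv_naturality_middle_assoc,
            ← MonoidalCategory.whiskerLeft_comp_assoc, hlam]
          monoidal

private lemma auxL0 :
    (herdSigma h ▷ h.A) ≫ (α_ h.A h.A h.A).hom ≫ h.q
      = (herdTau h ▷ h.A) ≫ (α_ h.A h.A h.A).hom ≫ h.q := by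
  have hq2 : (h.q ▷ (h.A ⊗ h.A)) ≫ h.q
      = (α_ h.A (h.A ⊗ h.A) (h.A ⊗ h.A)).hom ≫ (h.A ◁ (α_ h.A h.A (h.A ⊗ h.A)).hom) ≫
        (h.A ◁ (h.A ◁ h.q)) ≫ h.q := by
    rw [← h.q_assoc]
    simp
  calc (herdSigma h ▷ h.A) ≫ (α_ h.A h.A h.A).hom ≫ h.q
      = ((h.A ◁ (h.A ◁ h.del)) ▷ h.A) ≫ ((h.A ◁ (α_ h.A h.A h.A).inv) ▷ h.A) ≫
        ((α_ h.A (h.A ⊗ h.A) h.A).inv ▷ h.A) ≫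
        (α_ (h.A ⊗ (h.A ⊗ h.A)) h.A h.A).hom ≫ (h.q ▷ (h.A ⊗ h.A)) ≫ h.q := by
          simp only [herdSigma, comp_whiskerRight, assoc, associator_naturality_left_assoc]
    _ = ((h.A ◁ (h.A ◁ h.del)) ▷ h.A) ≫ ((h.A ◁ (α_ h.A h.A h.A).inv) ▷ h.A) ≫
        ((α_ h.A (h.A ⊗ h.A) h.A).inv ▷ h.A) ≫
        (α_ (h.A ⊗ (h.A ⊗ h.A)) h.A h.A).hom ≫
        (α_ h.A (h.A ⊗ h.A) (h.A ⊗ h.A)).hom ≫ (h.A ◁ (α_ h.A h.A (h.A ⊗ h.A)).hom) ≫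
        (h.A ◁ (h.A ◁ h.q)) ≫ h.q := by
          rw [hq2]
    _ = (α_ h.A (h.A ⊗ h.A) h.A).hom ≫ (h.A ◁ (α_ h.A h.A h.A).hom) ≫
        (h.A ◁ (h.A ◁ ((h.del ▷ h.A) ≫ (α_ h.A h.A h.A).hom))) ≫
        (h.A ◁ (h.A ◁ h.q)) ≫ h.q := by
          simp
          rw [show h.A ◁ h.A ◁ (α_ h.A h.A h.A).hom
              = h.A ◁ (α_ h.A (h.A ⊗ h.A) h.A).inv ≫ h.A ◁ (α_ h.A h.A h.A).inv ▷ h.A ≫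
                h.A ◁ (α_ (h.A ⊗ h.A) h.A h.A).hom ≫ h.A ◁ (α_ h.A h.A (h.A ⊗ h.A)).hom from by
            monoidal]
          simp only [assoc]
    _ = (α_ h.A (h.A ⊗ h.A) h.A).hom ≫ (h.A ◁ (α_ h.A h.A h.A).hom) ≫
        (h.A ◁ (h.A ◁ ((h.eps ▷ h.A) ≫ (λ_ h.A).hom))) ≫ h.q := by
          have e : (h.A ◁ (h.A ◁ ((h.del ▷ h.A) ≫ (α_ h.A h.A h.A).hom))) ≫
              (h.A ◁ (h.A ◁ h.q)) = h.A ◁ (h.A ◁ ((h.eps ▷ h.A) ≫ (λ_ h.A).hom)) := by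
            rw [← MonoidalCategory.whiskerLeft_comp, ← MonoidalCategory.whiskerLeft_comp]
            simp only [assoc, h.q_unit_left]
          slice_lhs 3 4 => rw [e]
    _ = (herdTau h ▷ h.A) ≫ (α_ h.A h.A h.A).hom ≫ h.q := by
          simp [herdTau]

private lemma auxL1 {H : C} (ϖ : h.A ⊗ h.A ⟶ H)
    (hcoeq : herdSigma h ≫ ϖ = herdTau h ≫ ϖ) :
    herdSigma h ≫ (h.A ◁ h.del) ≫ (α_ h.A h.A h.A).inv ≫ (ϖ ▷ h.A)
      = (α_ h.A h.A h.A).inv ≫ (ϖ ▷ h.A) := by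
  calc herdSigma h ≫ (h.A ◁ h.del) ≫ (α_ h.A h.A h.A).inv ≫ (ϖ ▷ h.A)
      = (h.A ◁ (h.A ◁ (h.del ≫ (h.A ◁ h.del)))) ≫
        (h.A ◁ (α_ h.A h.A (h.A ⊗ h.A)).inv) ≫
        (α_ h.A (h.A ⊗ h.A) (h.A ⊗ h.A)).inv ≫
        (α_ (h.A ⊗ (h.A ⊗ h.A)) h.A h.A).inv ≫
        ((h.q ▷ h.A) ▷ h.A) ≫ (ϖ ▷ h.A) := by
          simp only [herdSigma, assoc]
          rw [← whisker_exchange_assoc, associator_inv_naturality_left_assoc]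
          simp
    _ = (h.A ◁ (h.A ◁ (h.del ≫ (h.del ▷ h.A) ≫ (α_ h.A h.A h.A).hom))) ≫
        (h.A ◁ (α_ h.A h.A (h.A ⊗ h.A)).inv) ≫
        (α_ h.A (h.A ⊗ h.A) (h.A ⊗ h.A)).inv ≫
        (α_ (h.A ⊗ (h.A ⊗ h.A)) h.A h.A).inv ≫
        ((h.q ▷ h.A) ▷ h.A) ≫ (ϖ ▷ h.A) := by rw [h.coassoc]
    _ = (h.A ◁ (h.A ◁ h.del)) ≫ (h.A ◁ (α_ h.A h.A h.A).inv) ≫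
        (α_ h.A (h.A ⊗ h.A) h.A).inv ≫ ((herdSigma h ≫ ϖ) ▷ h.A) := by
          simp only [herdSigma, comp_whiskerRight, MonoidalCategory.whiskerLeft_comp, assoc]
          simp
          rw [show h.A ◁ h.A ◁ (α_ h.A h.A h.A).hom
              = (h.A ◁ (α_ h.A (h.A ⊗ h.A) h.A).inv ≫
                  h.A ◁ (α_ h.A h.A h.A).inv ▷ h.A ≫
                  (α_ h.A ((h.A ⊗ h.A) ⊗ h.A) h.A).inv ≫
                  (α_ h.A (h.A ⊗ h.A) h.A).inv ▷ h.A) ≫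
                (α_ (h.A ⊗ h.A ⊗ h.A) h.A h.A).hom ≫
                (α_ h.A (h.A ⊗ h.A) (h.A ⊗ h.A)).hom ≫
                h.A ◁ (α_ h.A h.A (h.A ⊗ h.A)).hom from by monoidal]
          simp
    _ = (h.A ◁ (h.A ◁ h.del)) ≫ (h.A ◁ (α_ h.A h.A h.A).inv) ≫
        (α_ h.A (h.A ⊗ h.A) h.A).inv ≫ ((herdTau h ≫ ϖ) ▷ h.A) := by rw [hcoeq]
    _ = (α_ h.A h.A h.A).inv ≫ (ϖ ▷ h.A) := by
          simp only [herdTau, comp_whiskerRight, MonoidalCategory.whiskerLeft_comp, assoc]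
          simp
          simp only [← MonoidalCategory.whiskerLeft_comp_assoc,
            ← MonoidalCategory.whiskerLeft_comp, h.counit_left]
          simp

private lemma auxL3 :
    ((h.A ⊗ h.A) ◁ h.del) ≫ (α_ (h.A ⊗ h.A) h.A h.A).inv ≫
        (((α_ h.A h.A h.A).hom ≫ h.q) ▷ h.A)
      = (α_ h.A h.A h.A).hom ≫ herdSigma h := by
  simp only [herdSigma, comp_whiskerRight, assoc]
  simp

end AuxHerd

/-- Let `A` be a herd in a braided monoidal category `C` with reflexive
coequalizers preserved by tensoring, and `ϖ : A ⊗ A ⟶ H` the coequalizer of `σ`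
and `τ`.  Then there is a unique morphism `μ_act : H ⊗ A ⟶ A` with
`μ_act ∘ (ϖ ⊗ 1_A) = q`, and the fusion morphism
`v = (μ_act ⊗ 1_A) ∘ (1_H ⊗ δ) : H ⊗ A ⟶ A ⊗ A` is invertible with inverse
`(ϖ ⊗ 1_A) ∘ (1_A ⊗ δ) : A ⊗ A ⟶ H ⊗ A`. -/
theorem stmt7 (h : Herd C) (H : C) (ϖ : h.A ⊗ h.A ⟶ H)
    (hcoeq : herdSigma h ≫ ϖ = herdTau h ≫ ϖ)
    (huniv : ∀ {Z : C} (f : h.A ⊗ h.A ⟶ Z),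
      herdSigma h ≫ f = herdTau h ≫ f → ∃! g : H ⟶ Z, ϖ ≫ g = f)
    (hunivL : ∀ (X : C) {Z : C} (f : X ⊗ (h.A ⊗ h.A) ⟶ Z),
      (X ◁ herdSigma h) ≫ f = (X ◁ herdTau h) ≫ f →
        ∃! g : X ⊗ H ⟶ Z, (X ◁ ϖ) ≫ g = f)
    (hunivR : ∀ (X : C) {Z : C} (f : (h.A ⊗ h.A) ⊗ X ⟶ Z),
      (herdSigma h ▷ X) ≫ f = (herdTau h ▷ X) ≫ f →
        ∃! g : H ⊗ X ⟶ Z, (ϖ ▷ X) ≫ g = f) :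
    ∃ μact : H ⊗ h.A ⟶ h.A,
      ((α_ h.A h.A h.A).inv ≫ (ϖ ▷ h.A) ≫ μact = h.q) ∧
      (∀ μ' : H ⊗ h.A ⟶ h.A,
        (α_ h.A h.A h.A).inv ≫ (ϖ ▷ h.A) ≫ μ' = h.q → μ' = μact) ∧
      (((H ◁ h.del) ≫ (α_ H h.A h.A).inv ≫ (μact ▷ h.A)) ≫
          ((h.A ◁ h.del) ≫ (α_ h.A h.A h.A).inv ≫ (ϖ ▷ h.A)) = 𝟙 (H ⊗ h.A)) ∧
      (((h.A ◁ h.del) ≫ (α_ h.A h.A h.A).inv ≫ (ϖ ▷ h.A)) ≫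
          ((H ◁ h.del) ≫ (α_ H h.A h.A).inv ≫ (μact ▷ h.A)) = 𝟙 (h.A ⊗ h.A)) := by
  have hμ0 : (herdSigma h ▷ h.A) ≫ ((α_ h.A h.A h.A).hom ≫ h.q)
      = (herdTau h ▷ h.A) ≫ ((α_ h.A h.A h.A).hom ≫ h.q) := by
    simpa only [assoc] using auxL0 h
  obtain ⟨μact, hμ, hμu⟩ := hunivR h.A ((α_ h.A h.A h.A).hom ≫ h.q) hμ0
  have hμ' : (α_ h.A h.A h.A).inv ≫ (ϖ ▷ h.A) ≫ μact = h.q := by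
    rw [hμ]; simp
  have hν : (ϖ ▷ h.A) ≫ ((H ◁ h.del) ≫ (α_ H h.A h.A).inv ≫ (μact ▷ h.A))
      = (α_ h.A h.A h.A).hom ≫ herdSigma h := by
    rw [← whisker_exchange_assoc, associator_inv_naturality_left_assoc,
      ← comp_whiskerRight, hμ, auxL3 h]
  refine ⟨μact, hμ', ?_, ?_, ?_⟩
  · intro μ' hμ''
    apply hμu
    rw [← cancel_epi (α_ h.A h.A h.A).inv]
    rw [← assoc] at hμ''
    rw [← assoc, hμ'']
    simp
  · -- v ≫ u = 𝟙 (H ⊗ A)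
    obtain ⟨g, hg, hgu⟩ := hunivR h.A (ϖ ▷ h.A)
      (by simp only [← comp_whiskerRight, hcoeq])
    have h1 : (ϖ ▷ h.A) ≫ (((H ◁ h.del) ≫ (α_ H h.A h.A).inv ≫ (μact ▷ h.A)) ≫
        ((h.A ◁ h.del) ≫ (α_ h.A h.A h.A).inv ≫ (ϖ ▷ h.A))) = ϖ ▷ h.A := by
      rw [← assoc, hν, assoc, auxL1 h ϖ hcoeq]
      simp
    have h2 := hgu _ h1
    have h3 := hgu (𝟙 (H ⊗ h.A)) (by simp)
    rw [h2, ← h3]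
  · -- u ≫ v = 𝟙 (A ⊗ A)
    calc ((h.A ◁ h.del) ≫ (α_ h.A h.A h.A).inv ≫ (ϖ ▷ h.A)) ≫
          ((H ◁ h.del) ≫ (α_ H h.A h.A).inv ≫ (μact ▷ h.A))
        = (h.A ◁ h.del) ≫ (α_ h.A h.A h.A).inv ≫ ((h.A ⊗ h.A) ◁ h.del) ≫
          (α_ (h.A ⊗ h.A) h.A h.A).inv ≫ (((α_ h.A h.A h.A).hom ≫ h.q) ▷ h.A) := by
            simp only [assoc]
            rw [← whisker_exchange_assoc, associator_inv_naturality_left_assoc,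
              ← comp_whiskerRight, hμ]
      _ = 𝟙 (h.A ⊗ h.A) := auxL2 h
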